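/- With the notation of a pre-quasi-Gelfand setting (H₀ a Hilbert space, D̃₊ dense in H₀ with another inner product ⟨·,·⟩₊, H₊ the ‖·‖₊-completion of D̃₊, ι₊ the embedding D̃₊ ⊆ H₊ → H₀), the following are equivalent: (ii) if a sequence fₙ ∈ D̃₊ satisfies fₙ → 0 in ‖·‖₊ and converges in ‖·‖₀ then the ‖·‖₀-limit is 0, and symmetrically with the roles of the two norms exchanged; (iii) ι₊ is closable and its closure is injective; (iv) D₋ is dense in H₀ and dense in the dual H₊′. -/

import Mathlib

open Filter Topology
open scoped ComplexInnerProductSpace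

noncomputable section

/-- `(u, v)` belongs to the adjoint relation of the embedding `ι₊ : D̃₊ ⊆ H₊ → H₀`. -/
def InAdjRel {Hp H₀ : Type*}
    [NormedAddCommGroup Hp] [InnerProductSpace ℂ Hp]
    [NormedAddCommGroup H₀] [InnerProductSpace ℂ H₀]
    (T : Hp →ₗ.[ℂ] H₀) (u : H₀) (v : Hp) : Prop :=
  ∀ f : T.domain, ⟪u, T f⟫ = ⟪v, (f : Hp)⟫

lemma dense_iff_forall_inner {E : Type*} [NormedAddCommGroup E] [InnerProductSpace ℂ E]
    [CompleteSpace E] (K : Submodule ℂ E) :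
    Dense (K : Set E) ↔ ∀ y : E, (∀ u ∈ K, ⟪u, y⟫ = 0) → y = 0 := by
  rw [Submodule.dense_iff_topologicalClosure_eq_top, Submodule.topologicalClosure_eq_top_iff,
    Submodule.eq_bot_iff]
  constructor
  · intro h y hy; exact h y ((Submodule.mem_orthogonal K y).2 hy)
  · intro h y hy; exact h y ((Submodule.mem_orthogonal K y).1 hy)


/-- In the pre-quasi-Gelfand setting, with `ι₊ : D̃₊ ⊆ H₊ → H₀` the
embedding (dense domain and dense range), the following are equivalent:
(ii) mixed limits of sequences in `D̃₊` are compatible;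
(iii) `ι₊` is closable and its closure is injective;
(iv) `D₋` is dense in `H₀` and (via the Riesz identification `ι₊*`) dense in `H₊′`. -/
theorem stmt8 {Hp H₀ : Type*}
    [NormedAddCommGroup Hp] [InnerProductSpace ℂ Hp] [CompleteSpace Hp]
    [NormedAddCommGroup H₀] [InnerProductSpace ℂ H₀] [CompleteSpace H₀]
    (T : Hp →ₗ.[ℂ] H₀)
    (hdom : Dense (T.domain : Set Hp))
    (hran : Dense (Set.range fun f : T.domain => T f)) :
    -- (ii) ↔ (iii):
    ((((∀ (fs : ℕ → T.domain) (y : H₀),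
          Tendsto (fun k => ((fs k : Hp))) atTop (𝓝 0) →
          Tendsto (fun k => T (fs k)) atTop (𝓝 y) → y = 0) ∧
        (∀ (fs : ℕ → T.domain) (x : Hp),
          Tendsto (fun k => T (fs k)) atTop (𝓝 0) →
          Tendsto (fun k => ((fs k : Hp))) atTop (𝓝 x) → x = 0))) ↔
      ((∀ y : H₀, ((0 : Hp), y) ∈ closure {p : Hp × H₀ | ∃ f : T.domain,
          (f : Hp) = p.1 ∧ T f = p.2} → y = 0) ∧
        (∀ x : Hp, (x, (0 : H₀)) ∈ closure {p : Hp × H₀ | ∃ f : T.domain,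
          (f : Hp) = p.1 ∧ T f = p.2} → x = 0))) ∧
    -- (iii) ↔ (iv):
    (((∀ y : H₀, ((0 : Hp), y) ∈ closure {p : Hp × H₀ | ∃ f : T.domain,
          (f : Hp) = p.1 ∧ T f = p.2} → y = 0) ∧
        (∀ x : Hp, (x, (0 : H₀)) ∈ closure {p : Hp × H₀ | ∃ f : T.domain,
          (f : Hp) = p.1 ∧ T f = p.2} → x = 0)) ↔
      (Dense {u : H₀ | ∃ v : Hp, InAdjRel T u v} ∧
        Dense {v : Hp | ∃ u : H₀, InAdjRel T u v})) := by
  classical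
  set S : Set (Hp × H₀) :=
    {p : Hp × H₀ | ∃ f : T.domain, (f : Hp) = p.1 ∧ T f = p.2} with hSdef
  have hSgraph : S = (T.graph : Set (Hp × H₀)) := by
    ext p
    simp [hSdef, LinearPMap.mem_graph_iff]
  constructor
  · -- (ii) ↔ (iii)
    constructor
    · rintro ⟨h1, h2⟩
      constructor
      · intro y hy
        obtain ⟨p, hp, hlim⟩ := mem_closure_iff_seq_limit.1 hy
        choose f hf1 hf2 using hp
        refine h1 f y ?_ ?_
        · have h := (continuous_fst.tendsto ((0 : Hp), y)).comp hlim
          simpa only [Function.comp_def, hf1] using h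
        · have h := (continuous_snd.tendsto ((0 : Hp), y)).comp hlim
          simpa only [Function.comp_def, hf2] using h
      · intro x hx
        obtain ⟨p, hp, hlim⟩ := mem_closure_iff_seq_limit.1 hx
        choose f hf1 hf2 using hp
        refine h2 f x ?_ ?_
        · have h := (continuous_snd.tendsto (x, (0 : H₀))).comp hlim
          simpa only [Function.comp_def, hf2] using h
        · have h := (continuous_fst.tendsto (x, (0 : H₀))).comp hlim
          simpa only [Function.comp_def, hf1] using h
    · rintro ⟨h1, h2⟩
      refine ⟨fun fs y hf hT => h1 y ?_, fun fs x hT hf => h2 x ?_⟩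
      · exact mem_closure_of_tendsto (hf.prodMk_nhds hT)
          (Eventually.of_forall fun k => ⟨fs k, rfl, rfl⟩)
      · exact mem_closure_of_tendsto (hf.prodMk_nhds hT)
          (Eventually.of_forall fun k => ⟨fs k, rfl, rfl⟩)
  · -- (iii) ↔ (iv)
    set e : WithLp 2 (Hp × H₀) ≃L[ℂ] Hp × H₀ := WithLp.prodContinuousLinearEquiv 2 ℂ Hp H₀
      with he
    set G : Submodule ℂ (WithLp 2 (Hp × H₀)) := T.graph.comap (e.toLinearEquiv : _ →ₗ[ℂ] _)
      with hG
    have hmemG : ∀ w : WithLp 2 (Hp × H₀), w ∈ G ↔ e w ∈ T.graph := fun w => Iff.rfl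
    have hpre : e ⁻¹' S = (G : Set (WithLp 2 (Hp × H₀))) := by
      ext w
      rw [Set.mem_preimage, hSgraph]
      exact (hmemG w).symm
    have hclos : ∀ q : Hp × H₀, q ∈ closure S ↔ e.symm q ∈ Gᗮᗮ := by
      intro q
      have h1 : e ⁻¹' closure S = closure (e ⁻¹' S) := e.toHomeomorph.preimage_closure S
      have h2 : ((Gᗮᗮ : Submodule ℂ (WithLp 2 (Hp × H₀))) : Set (WithLp 2 (Hp × H₀)))
          = closure (G : Set (WithLp 2 (Hp × H₀))) := by
        rw [Submodule.orthogonal_orthogonal_eq_closure, Submodule.topologicalClosure_coe]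
      calc q ∈ closure S ↔ e (e.symm q) ∈ closure S := by rw [e.apply_symm_apply]
        _ ↔ e.symm q ∈ e ⁻¹' closure S := Iff.rfl
        _ ↔ e.symm q ∈ closure (e ⁻¹' S) := by rw [h1]
        _ ↔ e.symm q ∈ closure (G : Set (WithLp 2 (Hp × H₀))) := by rw [hpre]
        _ ↔ e.symm q ∈ Gᗮᗮ := by rw [← h2]; exact Iff.rfl
    -- characterize Gᗮ
    have hGorth : ∀ w : WithLp 2 (Hp × H₀), w ∈ Gᗮ ↔ InAdjRel T w.snd (-w.fst) := by
      intro w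
      rw [Submodule.mem_orthogonal]
      constructor
      · intro h f
        have hm : (e.symm ((f : Hp), T f)) ∈ G := by
          rw [hmemG, e.apply_symm_apply]
          exact T.mem_graph f
        have h0 := h _ hm
        rw [WithLp.prod_inner_apply] at h0
        simp only [WithLp.ofLp_fst, WithLp.ofLp_snd] at h0
        have hfst : (e.symm ((f : Hp), T f)).fst = (f : Hp) := rfl
        have hsnd : (e.symm ((f : Hp), T f)).snd = T f := rfl
        rw [hfst, hsnd] at h0
        have h0' := congrArg (starRingEnd ℂ) h0
        simp only [map_add, inner_conj_symm, map_zero] at h0'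
        rw [inner_neg_left]
        linear_combination h0'
      · intro h u hu
        rw [hmemG, LinearPMap.mem_graph_iff] at hu
        obtain ⟨f, hf1, hf2⟩ := hu
        rw [WithLp.prod_inner_apply]
        simp only [WithLp.ofLp_fst, WithLp.ofLp_snd]
        have hfst : (e u).1 = u.fst := rfl
        have hsnd : (e u).2 = u.snd := rfl
        rw [hfst] at hf1
        rw [hsnd] at hf2
        have h0 := h f
        rw [inner_neg_left] at h0
        have h0' := congrArg (starRingEnd ℂ) h0
        simp only [map_neg, inner_conj_symm] at h0'
        rw [← hf1, ← hf2]
        linear_combination h0'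
    -- the two submodules
    set Dstar : Submodule ℂ H₀ :=
      { carrier := {u : H₀ | ∃ v : Hp, InAdjRel T u v}
        add_mem' := by
          rintro a b ⟨va, ha⟩ ⟨vb, hb⟩
          exact ⟨va + vb, fun f => by
            rw [inner_add_left, inner_add_left, ha f, hb f]⟩
        zero_mem' := ⟨0, fun f => by simp⟩
        smul_mem' := by
          rintro c a ⟨v, hv⟩
          exact ⟨c • v, fun f => by rw [inner_smul_left, inner_smul_left, hv f]⟩ } with hDstar
    set Rstar : Submodule ℂ Hp :=
      { carrier := {v : Hp | ∃ u : H₀, InAdjRel T u v}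
        add_mem' := by
          rintro a b ⟨ua, ha⟩ ⟨ub, hb⟩
          exact ⟨ua + ub, fun f => by
            rw [inner_add_left, inner_add_left, ha f, hb f]⟩
        zero_mem' := ⟨0, fun f => by simp⟩
        smul_mem' := by
          rintro c a ⟨u, hu⟩
          exact ⟨c • u, fun f => by rw [inner_smul_left, inner_smul_left, hu f]⟩ } with hRstar
    have hDset : {u : H₀ | ∃ v : Hp, InAdjRel T u v} = (Dstar : Set H₀) := rfl
    have hRset : {v : Hp | ∃ u : H₀, InAdjRel T u v} = (Rstar : Set Hp) := rfl
    rw [hDset, hRset, dense_iff_forall_inner, dense_iff_forall_inner]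
    constructor
    · rintro ⟨hA, hB⟩
      constructor
      · intro y hy
        refine hA y ((hclos _).2 ?_)
        rw [Submodule.mem_orthogonal]
        intro w hw
        rw [WithLp.prod_inner_apply]
        simp only [WithLp.ofLp_fst, WithLp.ofLp_snd]
        have hfst : (e.symm ((0 : Hp), y)).fst = (0 : Hp) := rfl
        have hsnd : (e.symm ((0 : Hp), y)).snd = y := rfl
        rw [hfst, hsnd, inner_zero_right]
        rw [hGorth] at hw
        have := hy w.snd ⟨-w.fst, hw⟩
        rw [this, add_zero]
      · intro x hx
        refine hB x ((hclos _).2 ?_)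
        rw [Submodule.mem_orthogonal]
        intro w hw
        rw [WithLp.prod_inner_apply]
        simp only [WithLp.ofLp_fst, WithLp.ofLp_snd]
        have hfst : (e.symm (x, (0 : H₀))).fst = x := rfl
        have hsnd : (e.symm (x, (0 : H₀))).snd = (0 : H₀) := rfl
        rw [hfst, hsnd, inner_zero_right]
        rw [hGorth] at hw
        have := hx (-w.fst) ⟨w.snd, hw⟩
        rw [inner_neg_left] at this
        have : ⟪w.fst, x⟫ = 0 := by linear_combination -this
        rw [this, zero_add]
    · rintro ⟨hA, hB⟩
      constructor
      · intro y hy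
        rw [hclos] at hy
        refine hA y ?_
        rintro u ⟨v, huv⟩
        have hw : (e.symm (-v, u)) ∈ Gᗮ := by
          rw [hGorth]
          have hfst : (e.symm (-v, u)).fst = -v := rfl
          have hsnd : (e.symm (-v, u)).snd = u := rfl
          rw [hfst, hsnd, neg_neg]
          exact huv
        have h0 := (Submodule.mem_orthogonal _ _).1 hy _ hw
        rw [WithLp.prod_inner_apply] at h0
        simp only [WithLp.ofLp_fst, WithLp.ofLp_snd] at h0
        have hfst : (e.symm ((0 : Hp), y)).fst = (0 : Hp) := rfl
        have hsnd : (e.symm ((0 : Hp), y)).snd = y := rfl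
        rw [hfst, hsnd, inner_zero_right, zero_add] at h0
        exact h0
      · intro x hx
        rw [hclos] at hx
        refine hB x ?_
        rintro v ⟨u, huv⟩
        have hw : (e.symm (-v, u)) ∈ Gᗮ := by
          rw [hGorth]
          have hfst : (e.symm (-v, u)).fst = -v := rfl
          have hsnd : (e.symm (-v, u)).snd = u := rfl
          rw [hfst, hsnd, neg_neg]
          exact huv
        have h0 := (Submodule.mem_orthogonal _ _).1 hx _ hw
        rw [WithLp.prod_inner_apply] at h0
        simp only [WithLp.ofLp_fst, WithLp.ofLp_snd] at h0
        have hfst : (e.symm (x, (0 : H₀))).fst = x := rfl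
        have hsnd : (e.symm (x, (0 : H₀))).snd = (0 : H₀) := rfl
        rw [hfst, hsnd, inner_zero_right, add_zero] at h0
        have hfst2 : (e.symm (-v, u)).fst = -v := rfl
        rw [hfst2, inner_neg_left] at h0
        linear_combination -h0
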